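/- arXiv:1809.03761 — 3 statements merged into one kernel-verified Lean document; each statement's English description precedes it below -/
import Mathlib

section
/- Let G be a strongly regular graph with parameters (v,k,λ,μ) and restricted eigenvalues r > s with multiplicities f and g. If r and s are not rational (equivalently, not integers), then f = g, and the parameters satisfy v = 4ℓ+1, k = 2ℓ, λ = ℓ−1, μ = ℓ for some positive integer ℓ; moreover r = (−1+√(4ℓ+1))/2 and s = (−1−√(4ℓ+1))/2. -/
/-- `t` is a restricted eigenvalue of `G`: an eigenvalue of the adjacency matrix having
an eigenvector which is not a scalar multiple of the all-ones vector. -/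
def IsRestrictedEigenvalue {V : Type*} [Fintype V] [DecidableEq V]
    (G : SimpleGraph V) [DecidableRel G.Adj] (t : ℝ) : Prop :=
  ∃ x : V → ℝ, (∀ c : ℝ, x ≠ fun _ => c) ∧ (G.adjMatrix ℝ).mulVec x = t • x


open Matrix SimpleGraph Finset

set_option maxHeartbeats 1000000


section Aux

variable {V : Type*} [Fintype V] [DecidableEq V] (G : SimpleGraph V) [DecidableRel G.Adj]

lemma aux_sum_mulVec_adj {k : ℕ} (hreg : G.IsRegularOfDegree k)
    (x : V → ℝ) : ∑ i, (G.adjMatrix ℝ *ᵥ x) i = k * ∑ i, x i := by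
  have : ∑ i, (G.adjMatrix ℝ *ᵥ x) i = (fun _ => (1:ℝ)) ⬝ᵥ (G.adjMatrix ℝ *ᵥ x) := by
    simp [dotProduct]
  rw [this, Matrix.dotProduct_mulVec]
  simp only [dotProduct, Matrix.vecMul, dotProduct]
  rw [Finset.mul_sum]
  refine Finset.sum_congr rfl fun j _ => ?_
  simp only [one_mul]
  have : ∑ i, G.adjMatrix ℝ i j = (k : ℝ) := by
    simp only [adjMatrix_apply]
    rw [Finset.sum_boole]
    have : (Finset.univ.filter fun i => G.Adj i j) = G.neighborFinset j := by
      ext i; simp [adj_comm]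
    rw [this]
    simp [hreg j]
  rw [← this, Finset.sum_mul]

lemma aux_restricted_sum_eq_zero {k : ℕ} (hreg : G.IsRegularOfDegree k)
    {t : ℝ} {x : V → ℝ} (hx : (G.adjMatrix ℝ).mulVec x = t • x) (htk : t ≠ (k:ℝ)) :
    ∑ i, x i = 0 := by
  have h1 : ∑ i, (G.adjMatrix ℝ *ᵥ x) i = t * ∑ i, x i := by
    rw [hx]; simp [Finset.mul_sum]
  have h2 := aux_sum_mulVec_adj G hreg x
  have : (t - k) * ∑ i, x i = 0 := by rw [sub_mul]; rw [h1] at h2; linarith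
  rcases mul_eq_zero.1 this with h | h
  · exact absurd (by linarith : t = (k:ℝ)) htk
  · exact h

lemma aux_compl_mulVec_apply (x : V → ℝ) (i : V) :
    (Gᶜ.adjMatrix ℝ *ᵥ x) i = (∑ j, x j) - x i - (G.adjMatrix ℝ *ᵥ x) i := by
  have he : ∀ j, (Gᶜ.adjMatrix ℝ) i j = 1 - (if i = j then 1 else 0) - G.adjMatrix ℝ i j := by
    intro j
    simp only [adjMatrix_apply, compl_adj]
    by_cases hij : i = j
    · subst hij; simp
    · by_cases ha : G.Adj i j <;> simp [hij, ha]
  simp only [Matrix.mulVec, dotProduct, he]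
  have : ∀ j, ((1 - if i = j then 1 else 0) - G.adjMatrix ℝ i j) * x j
      = x j - (if i = j then x j else 0) - G.adjMatrix ℝ i j * x j := by
    intro j; by_cases hij : i = j <;> by_cases ha : G.Adj i j <;> simp [hij, ha]
  rw [Finset.sum_congr rfl fun j _ => this j]
  rw [Finset.sum_sub_distrib, Finset.sum_sub_distrib, Finset.sum_ite_eq]
  simp

lemma aux_restricted_quadratic {v k l m : ℕ}
    (h : G.IsSRGWith v k l m) {t : ℝ} {x : V → ℝ}
    (hnc : ∀ c : ℝ, x ≠ fun _ => c) (hx : (G.adjMatrix ℝ).mulVec x = t • x)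
    (htk : t ≠ (k:ℝ)) : t^2 = ((l:ℝ) - m) * t + ((k:ℝ) - m) := by
  have hsum : ∑ j, x j = 0 := aux_restricted_sum_eq_zero G h.regular hx htk
  obtain ⟨i, hi⟩ : ∃ i, x i ≠ 0 := by
    by_contra hc
    push_neg at hc
    exact hnc 0 (funext fun j => hc j)
  have key1 : (G.adjMatrix ℝ ^ 2 *ᵥ x) i = t^2 * x i := by
    rw [pow_two, ← Matrix.mulVec_mulVec, hx, Matrix.mulVec_smul, hx]
    simp [mul_comm, pow_two]; ring
  have key2 : (G.adjMatrix ℝ ^ 2 *ᵥ x) i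
      = k * x i + l * (t * x i) + m * (-x i - t * x i) := by
    rw [h.matrix_eq (α := ℝ), Matrix.add_mulVec, Matrix.add_mulVec]
    have h1 : ((k • (1 : Matrix V V ℝ)) *ᵥ x) i = k * x i := by
      simp [Matrix.smul_mulVec]
    have h2 : ((l • G.adjMatrix ℝ) *ᵥ x) i = l * (t * x i) := by
      rw [Matrix.smul_mulVec, hx]; simp
    have h3 : ((m • Gᶜ.adjMatrix ℝ) *ᵥ x) i = m * (-x i - t * x i) := by
      rw [Matrix.smul_mulVec]
      simp only [Pi.smul_apply, smul_eq_mul]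
      rw [aux_compl_mulVec_apply, hsum, hx]
      simp only [Pi.smul_apply, smul_eq_mul]
      ring
    simp only [Pi.add_apply, h1, h2, h3]
  have : (t^2 - (((l:ℝ) - m) * t + ((k:ℝ) - m))) * x i = 0 := by
    rw [key1] at key2; ring_nf; ring_nf at key2; linarith
  rcases mul_eq_zero.1 this with h' | h'
  · linarith
  · exact absurd h' hi

lemma aux_card_filter_le_finrank {ι : Type*} [Fintype ι] {M : Type*} [AddCommGroup M]
    [Module ℝ M] [Module.Finite ℝ M] (S : Submodule ℝ M) (b : ι → M)
    (hli : LinearIndependent ℝ b)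
    (p : ι → Prop) [DecidablePred p] (hmem : ∀ i, p i → b i ∈ S) :
    (Finset.univ.filter p).card ≤ Module.finrank ℝ S := by
  have hli2 : LinearIndependent ℝ (fun i : {i // p i} => (⟨b i, hmem i i.2⟩ : S)) := by
    apply LinearIndependent.of_comp S.subtype
    exact hli.comp Subtype.val Subtype.val_injective
  have := hli2.fintype_card_le_finrank
  rwa [Fintype.card_subtype] at this

end Aux

/-- Conference graphs: if the restricted eigenvalues `r > s` of a strongly regular graph
with parameters `(v, k, l, m)` are irrational, then their multiplicities are equal and
`v = 4ℓ+1`, `k = 2ℓ`, `l = ℓ-1`, `m = ℓ` for some positive integer `ℓ`; moreover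
`r = (-1 + √(4ℓ+1))/2` and `s = (-1 - √(4ℓ+1))/2`. -/
theorem conference_graph_parameters {V : Type*} [Fintype V] [DecidableEq V]
    (G : SimpleGraph V) [DecidableRel G.Adj] (v k l m : ℕ)
    (h : G.IsSRGWith v k l m) (hk0 : 0 < k) (hkv : k < v - 1)
    (r s : ℝ)
    (hr : IsRestrictedEigenvalue G r) (hs : IsRestrictedEigenvalue G s) (hrs : s < r)
    (honly : ∀ t : ℝ, IsRestrictedEigenvalue G t → t = r ∨ t = s)
    (f g : ℕ)
    (hf : f = Module.finrank ℝ
      (Module.End.eigenspace (Matrix.toLin' (G.adjMatrix ℝ)) r))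
    (hg : g = Module.finrank ℝ
      (Module.End.eigenspace (Matrix.toLin' (G.adjMatrix ℝ)) s))
    (hirr_r : Irrational r) (hirr_s : Irrational s) :
    f = g ∧ ∃ L : ℕ, 0 < L ∧ v = 4 * L + 1 ∧ k = 2 * L ∧ l = L - 1 ∧ m = L ∧
      r = (-1 + Real.sqrt (4 * (L : ℝ) + 1)) / 2 ∧
      s = (-1 - Real.sqrt (4 * (L : ℝ) + 1)) / 2 := by
  classical
  have hrk : r ≠ (k:ℝ) := fun hc => Nat.not_irrational k (hc ▸ hirr_r)
  have hsk : s ≠ (k:ℝ) := fun hc => Nat.not_irrational k (hc ▸ hirr_s)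
  have hrs' : r ≠ s := ne_of_gt hrs
  -- quadratic relations
  obtain ⟨xr, hxrnc, hxr⟩ := hr
  obtain ⟨xs, hxsnc, hxs⟩ := hs
  have hrq : r^2 = ((l:ℝ) - m) * r + ((k:ℝ) - m) :=
    aux_restricted_quadratic G h hxrnc hxr hrk
  have hsq : s^2 = ((l:ℝ) - m) * s + ((k:ℝ) - m) :=
    aux_restricted_quadratic G h hxsnc hxs hsk
  have hadd : r + s = (l:ℝ) - m := by
    have : (r - s) * (r + s - ((l:ℝ) - m)) = 0 := by ring_nf; nlinarith [hrq, hsq]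
    rcases mul_eq_zero.1 this with h' | h'
    · exact absurd (by linarith) hrs'
    · linarith
  have hmul : r * s = (m:ℝ) - k := by nlinarith [hrq, hadd]
  -- nonempty V
  have hv3 : 3 ≤ v := by omega
  have hcard : Fintype.card V = v := h.card
  have hVne : Nonempty V := by
    rw [← Fintype.card_pos_iff, hcard]; omega
  obtain ⟨v₀⟩ := hVne
  -- hermitian setup
  have hA : (G.adjMatrix ℝ).IsHermitian := by
    rw [Matrix.IsHermitian, conjTranspose_eq_transpose_of_trivial]
    exact G.transpose_adjMatrix
  set T := Matrix.toLin' (G.adjMatrix ℝ) with hT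
  set eig := hA.eigenvalues with heig
  set b : V → (V → ℝ) := fun i => (WithLp.equiv 2 (V → ℝ)) (hA.eigenvectorBasis i) with hb
  have hbeig : ∀ i : V, (G.adjMatrix ℝ).mulVec (b i) = eig i • b i := fun i =>
    hA.mulVec_eigenvectorBasis i
  have hbmem : ∀ i : V, b i ∈ Module.End.eigenspace T (eig i) := by
    intro i
    rw [Module.End.mem_eigenspace_iff]
    exact hbeig i
  have hbli : LinearIndependent ℝ b := by
    have h := hA.eigenvectorBasis.toBasis.linearIndependent
    have := h.map' (WithLp.linearEquiv 2 ℝ (V → ℝ)).toLinearMap (LinearEquiv.ker _)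
    exact this
  have hbne : ∀ i : V, b i ≠ 0 := fun i => by
    have h := hA.eigenvectorBasis.toBasis.ne_zero i
    simpa [hb] using h
  -- classification of eigenvalues
  have hclass : ∀ i : V, eig i = (k:ℝ) ∨ eig i = r ∨ eig i = s := by
    intro i
    have hx : (G.adjMatrix ℝ).mulVec (b i) = eig i • b i := hbeig i
    by_cases hconst : ∃ c : ℝ, b i = fun _ => c
    · obtain ⟨c, hc⟩ := hconst
      have hc0 : c ≠ 0 := by
        intro h0
        exact hbne i (by rw [hc, h0]; rfl)
      left
      have := congrFun hx v₀
      rw [hc] at this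
      simp only [Pi.smul_apply, smul_eq_mul] at this
      rw [adjMatrix_mulVec_apply] at this
      rw [Finset.sum_const, nsmul_eq_mul] at this
      have hdeg : (#(G.neighborFinset v₀) : ℝ) = k := by exact_mod_cast h.regular v₀
      rw [hdeg] at this
      rcases mul_eq_zero.1 (by linarith : ((k:ℝ) - eig i) * c = 0) with h' | h'
      · linarith
      · exact absurd h' hc0
    · push_neg at hconst
      exact Or.inr (honly _ ⟨_, hconst, hx⟩)
  -- distinctness
  have hkr : (k:ℝ) ≠ r := fun hc => hrk hc.symm
  have hks : (k:ℝ) ≠ s := fun hc => hsk hc.symm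
  -- counts
  set ck := (Finset.univ.filter fun i => eig i = (k:ℝ)).card with hck
  set cr := (Finset.univ.filter fun i => eig i = r).card with hcr
  set cs := (Finset.univ.filter fun i => eig i = s).card with hcs
  have hsum3 : ck + cr + cs = v := by
    rw [← hcard, hck, hcr, hcs]
    rw [Finset.card_filter, Finset.card_filter, Finset.card_filter, ← Finset.sum_add_distrib,
      ← Finset.sum_add_distrib]
    rw [Fintype.card, Finset.card_eq_sum_ones]
    refine Finset.sum_congr rfl fun i _ => ?_
    rcases hclass i with h' | h' | h' <;>
      simp [h', hkr, hks, hrs', hkr.symm, hks.symm, hrs'.symm]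
  -- eigenspace of k is spanned by constants
  have hEk : Module.End.eigenspace T (k:ℝ) = Submodule.span ℝ {(fun _ => 1 : V → ℝ)} := by
    apply le_antisymm
    · intro x hx
      rw [Module.End.mem_eigenspace_iff] at hx
      have hx' : (G.adjMatrix ℝ).mulVec x = (k:ℝ) • x := hx
      by_cases hconst : ∃ c : ℝ, x = fun _ => c
      · obtain ⟨c, hc⟩ := hconst
        rw [hc]
        rw [show (fun _ => c : V → ℝ) = c • (fun _ => 1 : V → ℝ) by
          funext j; simp]
        exact Submodule.smul_mem _ c (Submodule.mem_span_singleton_self _)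
      · push_neg at hconst
        rcases honly _ ⟨x, hconst, hx'⟩ with h' | h'
        · exact absurd h'.symm hrk
        · exact absurd h'.symm hsk
    · rw [Submodule.span_singleton_le_iff_mem, Module.End.mem_eigenspace_iff]
      show (G.adjMatrix ℝ).mulVec _ = _
      funext j
      show (G.adjMatrix ℝ *ᵥ fun _ => (1:ℝ)) j = ((k:ℝ) • fun _ => (1:ℝ)) j
      rw [adjMatrix_mulVec_apply]
      rw [Finset.sum_const, nsmul_eq_mul]
      have hdeg : (#(G.neighborFinset j) : ℝ) = k := by exact_mod_cast h.regular j
      rw [hdeg]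
      simp
  have hfrEk : Module.finrank ℝ (Module.End.eigenspace T (k:ℝ)) = 1 := by
    rw [hEk]
    apply finrank_span_singleton
    intro hc
    have := congrFun hc v₀
    simp at this
  -- counts ≤ finranks
  have hckle : ck ≤ 1 := by
    rw [← hfrEk]
    exact aux_card_filter_le_finrank _ _ hbli _ fun i hi => hi ▸ hbmem i
  have hcrle : cr ≤ f := by
    rw [hf]
    exact aux_card_filter_le_finrank _ _ hbli _ fun i hi => hi ▸ hbmem i
  have hcsle : cs ≤ g := by
    rw [hg]
    exact aux_card_filter_le_finrank _ _ hbli _ fun i hi => hi ▸ hbmem i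
  -- dimension bound
  have hdim : 1 + f + g ≤ v := by
    rw [hf, hg, ← hfrEk, ← hcard]
    have hind := Module.End.eigenspaces_iSupIndep T
    set Ea := Module.End.eigenspace T (k:ℝ)
    set Eb := Module.End.eigenspace T r
    set Ec := Module.End.eigenspace T s
    have hab' : Disjoint Ea Eb := hind.pairwiseDisjoint hkr
    have hc : Disjoint (Ea ⊔ Eb) Ec := by
      refine Disjoint.symm ((hind s).mono_right ?_)
      refine sup_le ?_ ?_
      · exact le_iSup₂ (f := fun j (_ : j ≠ s) => Module.End.eigenspace T j) (k:ℝ) hks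
      · exact le_iSup₂ (f := fun j (_ : j ≠ s) => Module.End.eigenspace T j) r hrs'
    have h1 : Module.finrank ℝ ↥(Ea ⊔ Eb) = Module.finrank ℝ Ea + Module.finrank ℝ Eb := by
      have := Submodule.finrank_sup_add_finrank_inf_eq Ea Eb
      rw [hab'.eq_bot] at this
      simpa using this
    have h2 : Module.finrank ℝ ↥(Ea ⊔ Eb ⊔ Ec)
        = Module.finrank ℝ ↥(Ea ⊔ Eb) + Module.finrank ℝ Ec := by
      have := Submodule.finrank_sup_add_finrank_inf_eq (Ea ⊔ Eb) Ec
      rw [hc.eq_bot] at this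
      simpa using this
    calc Module.finrank ℝ Ea + Module.finrank ℝ Eb + Module.finrank ℝ Ec
        = Module.finrank ℝ ↥(Ea ⊔ Eb ⊔ Ec) := by rw [h2, h1]
      _ ≤ Module.finrank ℝ (V → ℝ) := Submodule.finrank_le _
      _ = Fintype.card V := Module.finrank_fintype_fun_eq_card ℝ
  -- squeeze
  have hckeq : ck = 1 := by omega
  have hcreq : cr = f := by omega
  have hcseq : cs = g := by omega
  -- trace
  have htrace : (0:ℝ) = (k:ℝ) * ck + r * cr + s * cs := by
    have ht1 : Matrix.trace (G.adjMatrix ℝ) = ∑ i, eig i := by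
      nth_rewrite 1 [hA.spectral_theorem]
      rw [Unitary.conjStarAlgAut_apply, Matrix.trace_mul_cycle, Unitary.coe_star_mul_self, one_mul, Matrix.trace_diagonal]
      simp [heig]
    have ht0 : Matrix.trace (G.adjMatrix ℝ) = 0 := by
      simp [Matrix.trace, Matrix.diag]
    have hsplit : ∑ i, eig i = (ck:ℝ) * k + (cr:ℝ) * r + (cs:ℝ) * s := by
      have key : ∀ (p : V → Prop) (_ : DecidablePred p) (y : ℝ),
          (((Finset.univ.filter p).card : ℝ)) * y = ∑ i, if p i then y else 0 := by
        intro p hp y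
        rw [← Finset.sum_filter, Finset.sum_const, nsmul_eq_mul]
      rw [hck, hcr, hcs, key _ _ (k:ℝ), key _ _ r, key _ _ s, ← Finset.sum_add_distrib,
        ← Finset.sum_add_distrib]
      refine Finset.sum_congr rfl fun i _ => ?_
      rcases hclass i with h' | h' | h' <;>
        simp [h', hkr, hks, hrs', hkr.symm, hks.symm, hrs'.symm]
    rw [ht0] at ht1
    rw [hsplit] at ht1
    linarith [ht1]
  rw [hckeq, hcreq, hcseq] at htrace
  -- f = g
  have hfg : f = g := by
    by_contra hne
    have hd : (f:ℝ) - g ≠ 0 := by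
      intro hc
      exact hne (Nat.cast_injective (by linarith : (f:ℝ) = g))
    have hreq : r = (-(k:ℝ) - ((l:ℝ) - m) * g) / ((f:ℝ) - g) := by
      rw [eq_div_iff hd]
      have hs' : s = ((l:ℝ) - m) - r := by linarith [hadd]
      rw [hs'] at htrace
      push_cast at htrace ⊢
      ring_nf
      ring_nf at htrace
      linarith
    apply hirr_r
    refine ⟨(-(k:ℚ) - ((l:ℚ) - m) * g) / ((f:ℚ) - g), ?_⟩
    rw [hreq]
    push_cast
    ring
  subst hfg
  -- now g is replaced or f... after subst, variable f remains? subst hfg replaces g by f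
  refine ⟨rfl, ?_⟩
  -- k = f * (m - l)
  have hkf : (k:ℝ) = (f:ℝ) * ((m:ℝ) - l) := by
    have : (k:ℝ) + (f:ℝ) * (r + s) = 0 := by push_cast at htrace ⊢; linarith
    rw [hadd] at this
    linarith
  have hf0 : 0 < f := by
    rcases Nat.eq_zero_or_pos f with h0 | h0
    · rw [h0] at hkf
      simp at hkf
      omega
    · exact h0
  have hveq : v = 2 * f + 1 := by omega
  -- l < m
  have hlm : l < m := by
    by_contra hc
    push_neg at hc
    have : (m:ℝ) - l ≤ 0 := by
      have := Nat.cast_le (α := ℝ) |>.2 hc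
      linarith
    nlinarith [hkf, (Nat.cast_pos (α := ℝ)).2 hk0, (Nat.cast_pos (α := ℝ)).2 hf0]
  -- m = l + 1
  have hmeq : m = l + 1 := by
    by_contra hc
    have hge : l + 2 ≤ m := by omega
    have h2 : (2:ℝ) ≤ (m:ℝ) - l := by
      have := Nat.cast_le (α := ℝ) |>.2 hge
      push_cast at this
      linarith
    have hklt : (k:ℝ) < 2 * f := by
      have : k < 2 * f := by omega
      exact_mod_cast this
    nlinarith [(Nat.cast_pos (α := ℝ)).2 hf0]
  have hkfnat : k = f := by
    have : (k:ℝ) = (f:ℝ) := by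
      rw [hkf, hmeq]
      push_cast
      ring
    exact_mod_cast this
  -- param_eq
  have hpe := SimpleGraph.IsSRGWith.param_eq G h (by omega : 0 < v)
  have hvk1 : v - k - 1 = k := by omega
  rw [hvk1] at hpe
  have hklm : k - l - 1 = m := Nat.eq_of_mul_eq_mul_left hk0 (by linarith [hpe])
  have hk2m : k = 2 * m := by omega
  refine ⟨m, by omega, by omega, hk2m, by omega, rfl, ?_, ?_⟩
  · -- r formula
    have hc1 : (l:ℝ) - m = -1 := by
      rw [hmeq]; push_cast; ring
    have hc0 : (k:ℝ) - m = m := by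
      rw [hk2m]; push_cast; ring
    have hrq2 : r^2 + r - m = 0 := by rw [hrq, hc1, hc0]; ring
    have hrpos : 0 < 2*r + 1 := by
      have : r + s = -1 := by rw [hadd, hc1]
      linarith
    have hsq2 : (2*r+1)^2 = 4*(m:ℝ)+1 := by nlinarith [hrq2]
    have hsqrt : Real.sqrt (4*(m:ℝ)+1) = 2*r+1 := by
      rw [← hsq2, Real.sqrt_sq (le_of_lt hrpos)]
    rw [hsqrt]; ring
  · have hc1 : (l:ℝ) - m = -1 := by
      rw [hmeq]; push_cast; ring
    have hc0 : (k:ℝ) - m = m := by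
      rw [hk2m]; push_cast; ring
    have hrq2 : r^2 + r - m = 0 := by rw [hrq, hc1, hc0]; ring
    have hrpos : 0 < 2*r + 1 := by
      have : r + s = -1 := by rw [hadd, hc1]
      linarith
    have hsq2 : (2*r+1)^2 = 4*(m:ℝ)+1 := by nlinarith [hrq2]
    have hsqrt : Real.sqrt (4*(m:ℝ)+1) = 2*r+1 := by
      rw [← hsq2, Real.sqrt_sq (le_of_lt hrpos)]
    have hsv : s = -1 - r := by
      have : r + s = -1 := by rw [hadd, hc1]
      linarith
    rw [hsqrt, hsv]; ring
end

section
/- Let G be a strongly regular graph satisfying the hypotheses that k/n → κ, k̄/n → κ̄, r/n → ρ, s/n → σ (with G depending on n, all limits finite, and ω := κ + κ̄). If ρ > 0 or σ < 0, then κ > 0 and κ̄ > 0, and exactly one of ρ = 0 or σ = 0 holds; moreover f/n → ωσ/(σ−ρ) and g/n → ωρ/(ρ−σ), and fg/n → κκ̄ω/(ρ−σ)². -/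
open Filter Topology

/-- Asymptotics for a sequence of strongly regular graphs `G = G(n)` on `v n` vertices
with degree `k n`, complement degree `kb n = v n - k n - 1`, restricted eigenvalues
`r n > s n` of multiplicities `f n`, `g n`, with `k/n → κ`, `k̄/n → κ̄`, `r/n → ρ`,
`s/n → σ`. If `ρ > 0` or `σ < 0`, then `κ > 0` and `κ̄ > 0`, exactly one of `ρ = 0` or
`σ = 0` holds, and `f/n → ωσ/(σ-ρ)`, `g/n → ωρ/(ρ-σ)`, `fg/n → κκ̄ω/(ρ-σ)²`, where
`ω = κ + κ̄`. -/
theorem srg_asymptotics {v k kb r s f g : ℕ → ℝ} {κ κb ρ σ : ℝ}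
    (hkbdef : ∀ n, kb n = v n - k n - 1)
    (hbound : ∀ n, -1 < r n ∧ r n ≤ k n ∧ -(k n) ≤ s n ∧ s n < 0 ∧ s n < r n)
    (hfdef : ∀ n, f n = ((v n - 1) * s n + k n) / (s n - r n))
    (hgdef : ∀ n, g n = ((v n - 1) * r n + k n) / (r n - s n))
    (hfgdef : ∀ n, f n * g n = k n * kb n * v n / (r n - s n) ^ 2)
    (hk : Tendsto (fun n : ℕ => k n / (n : ℝ)) atTop (nhds κ))
    (hkb : Tendsto (fun n : ℕ => kb n / (n : ℝ)) atTop (nhds κb))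
    (hr : Tendsto (fun n : ℕ => r n / (n : ℝ)) atTop (nhds ρ))
    (hs : Tendsto (fun n : ℕ => s n / (n : ℝ)) atTop (nhds σ))
    (hσlb : -min κ κb ≤ σ) (hσ0 : σ ≤ 0) (h0ρ : 0 ≤ ρ) (hρub : ρ ≤ min κ κb)
    (hcase : 0 < ρ ∨ σ < 0) :
    0 < κ ∧ 0 < κb ∧
    ((ρ = 0 ∧ σ ≠ 0) ∨ (ρ ≠ 0 ∧ σ = 0)) ∧
    Tendsto (fun n : ℕ => f n / (n : ℝ)) atTop (nhds ((κ + κb) * σ / (σ - ρ))) ∧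
    Tendsto (fun n : ℕ => g n / (n : ℝ)) atTop (nhds ((κ + κb) * ρ / (ρ - σ))) ∧
    Tendsto (fun n : ℕ => f n * g n / (n : ℝ)) atTop
      (nhds (κ * κb * (κ + κb) / (ρ - σ) ^ 2)) := by

  -- basic positivity of κ, κb
  have hmin : 0 < min κ κb := by
    by_contra h
    push_neg at h
    have h1 : ρ ≤ 0 := le_trans hρub h
    have h2 : 0 ≤ σ := le_trans (by linarith) hσlb
    rcases hcase with hc | hc <;> linarith
  have hκ : 0 < κ := lt_of_lt_of_le hmin (min_le_left _ _)
  have hκb : 0 < κb := lt_of_lt_of_le hmin (min_le_right _ _)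
  have hσρ : σ < ρ := by rcases hcase with hc | hc <;> linarith
  have hσρne : σ - ρ ≠ 0 := by linarith
  have hρσne : ρ - σ ≠ 0 := by linarith
  have hinv : Tendsto (fun n : ℕ => 1 / (n : ℝ)) atTop (nhds 0) :=
    tendsto_one_div_atTop_nhds_zero_nat
  have hk2 : Tendsto (fun n : ℕ => k n / (n : ℝ) ^ 2) atTop (nhds 0) := by
    have h := hk.mul hinv
    rw [mul_zero] at h
    exact h.congr fun n => by ring
  have hω1 : Tendsto (fun n : ℕ => (v n - 1) / (n : ℝ)) atTop (nhds (κ + κb)) :=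
    (hk.add hkb).congr fun n => by rw [hkbdef n]; ring
  have hA : Tendsto (fun n : ℕ => ((v n - 1) * s n + k n) / (n : ℝ) ^ 2) atTop
      (nhds ((κ + κb) * σ)) := by
    have h := (hω1.mul hs).add hk2
    rw [add_zero] at h
    exact h.congr fun n => by ring
  have hB : Tendsto (fun n : ℕ => ((v n - 1) * r n + k n) / (n : ℝ) ^ 2) atTop
      (nhds ((κ + κb) * ρ)) := by
    have h := (hω1.mul hr).add hk2
    rw [add_zero] at h
    exact h.congr fun n => by ring
  have hsr : Tendsto (fun n : ℕ => (s n - r n) / (n : ℝ)) atTop (nhds (σ - ρ)) :=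
    (hs.sub hr).congr fun n => by ring
  have hrs : Tendsto (fun n : ℕ => (r n - s n) / (n : ℝ)) atTop (nhds (ρ - σ)) :=
    (hr.sub hs).congr fun n => by ring
  have hv : Tendsto (fun n : ℕ => v n / (n : ℝ)) atTop (nhds (κ + κb)) := by
    have h := hω1.add hinv
    rw [add_zero] at h
    exact h.congr fun n => by ring
  -- the key algebraic identity
  have hid : ∀ n, ((v n - 1) * s n + k n) * ((v n - 1) * r n + k n)
      = -(k n * kb n * v n) := by
    intro n
    have hlt := (hbound n).2.2.2.2
    have hd : r n - s n ≠ 0 := sub_ne_zero.mpr (ne_of_gt hlt)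
    have hd' : s n - r n ≠ 0 := sub_ne_zero.mpr (ne_of_lt hlt)
    have h1 := hfgdef n
    rw [hfdef n, hgdef n] at h1
    field_simp at h1
    have h2 : (((v n - 1) * s n + k n) * ((v n - 1) * r n + k n)
        + k n * kb n * v n) * (r n - s n) ^ 2 = 0 := by linear_combination (r n - s n) * h1
    rcases mul_eq_zero.mp h2 with h | h
    · linarith
    · exact absurd h (pow_ne_zero 2 hd)
  -- ρ σ = 0
  have hT1 : Tendsto (fun n : ℕ =>
      (((v n - 1) * s n + k n) * ((v n - 1) * r n + k n)) / (n : ℝ) ^ 4) atTop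
      (nhds (((κ + κb) * σ) * ((κ + κb) * ρ))) := by
    have h := hA.mul hB
    exact h.congr fun n => by ring
  have hT2 : Tendsto (fun n : ℕ =>
      (((v n - 1) * s n + k n) * ((v n - 1) * r n + k n)) / (n : ℝ) ^ 4) atTop
      (nhds 0) := by
    have h := (((hk.mul hkb).mul hv).mul hinv).neg
    rw [mul_zero, neg_zero] at h
    exact h.congr fun n => by rw [hid n]; ring
  have hprod : ((κ + κb) * σ) * ((κ + κb) * ρ) = 0 := tendsto_nhds_unique hT1 hT2
  have hσρ0 : σ * ρ = 0 := by
    have hω : (0:ℝ) < κ + κb := by linarith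
    have h2 : (κ + κb) ^ 2 * (σ * ρ) = 0 := by linear_combination hprod
    rcases mul_eq_zero.mp h2 with h | h
    · exact absurd h (pow_ne_zero 2 (ne_of_gt hω))
    · exact h
  have hone : (ρ = 0 ∧ σ ≠ 0) ∨ (ρ ≠ 0 ∧ σ = 0) := by
    rcases mul_eq_zero.mp hσρ0 with h | h
    · right
      rcases hcase with hc | hc
      · exact ⟨ne_of_gt hc, h⟩
      · exact absurd h (ne_of_lt hc)
    · left
      rcases hcase with hc | hc
      · exact absurd h (ne_of_gt hc)
      · exact ⟨h, ne_of_lt hc⟩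
  refine ⟨hκ, hκb, hone, ?_, ?_, ?_⟩
  · have h := hA.div hsr hσρne
    refine h.congr' ?_
    filter_upwards [eventually_ge_atTop 1] with n hn
    have hn0 : (n : ℝ) ≠ 0 := Nat.cast_ne_zero.mpr (by omega)
    have hd' : s n - r n ≠ 0 := sub_ne_zero.mpr (ne_of_lt (hbound n).2.2.2.2)
    rw [Pi.div_apply, hfdef n]
    field_simp
  · have h := hB.div hrs hρσne
    refine h.congr' ?_
    filter_upwards [eventually_ge_atTop 1] with n hn
    have hn0 : (n : ℝ) ≠ 0 := Nat.cast_ne_zero.mpr (by omega)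
    have hd : r n - s n ≠ 0 := sub_ne_zero.mpr (ne_of_gt (hbound n).2.2.2.2)
    rw [Pi.div_apply, hgdef n]
    field_simp
  · have hnum : Tendsto (fun n : ℕ => k n / (n:ℝ) * (kb n / (n:ℝ)) * (v n / (n:ℝ)))
        atTop (nhds (κ * κb * (κ + κb))) := (hk.mul hkb).mul hv
    have hden : Tendsto (fun n : ℕ => ((r n - s n) / (n:ℝ)) ^ 2) atTop
        (nhds ((ρ - σ) ^ 2)) := hrs.pow 2
    have h := hnum.div hden (pow_ne_zero 2 hρσne)
    refine h.congr' ?_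
    filter_upwards [eventually_ge_atTop 1] with n hn
    have hn0 : (n : ℝ) ≠ 0 := Nat.cast_ne_zero.mpr (by omega)
    have hd : r n - s n ≠ 0 := sub_ne_zero.mpr (ne_of_gt (hbound n).2.2.2.2)
    rw [Pi.div_apply, hfgdef n]
    field_simp
end

section
/- The generating function identity Σ_{(a,b): a+b ≤ n} k_{a,b} 𝒦_{a,b}(j,h) ξ₁^a ξ₂^b = (1 + kξ₁ + k̄ξ₂)^{n−j−h} (1 + rξ₁ + s̄ξ₂)^j (1 + sξ₁ + r̄ξ₂)^h holds for the bivariate Krawtchouk polynomials when j, h ≥ 0 and j + h ≤ n, where k_{a,b} = (n choose n−a−b, a, b) k^a k̄^b. -/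
/-- The rising factorial `(x)_m = x (x+1) ⋯ (x+m-1)`. -/
noncomputable def risingFac (x : ℝ) (m : ℕ) : ℝ := ∏ i ∈ Finset.range m, (x + i)

/-- The bivariate Krawtchouk (Rahman) polynomial `𝒦_{a,b}(j,h)`: the terminating
Aomoto–Gelfand hypergeometric series with parameters `u₁ = 1 - r/k`, `u₂ = 1 - s̄/k̄`,
`u₃ = 1 - s/k`, `u₄ = 1 - r̄/k̄`, where `s̄ = -r-1` and `r̄ = -s-1`. -/
noncomputable def bivariateKrawtchouk (n : ℕ) (k kb r s : ℝ) (a b j h : ℕ) : ℝ :=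
  ∑ l1 ∈ Finset.range (n + 1), ∑ l2 ∈ Finset.range (n + 1),
    ∑ l3 ∈ Finset.range (n + 1), ∑ l4 ∈ Finset.range (n + 1),
      if l1 + l2 + l3 + l4 ≤ n then
        risingFac (-(a : ℝ)) (l1 + l3) * risingFac (-(b : ℝ)) (l2 + l4) *
          risingFac (-(j : ℝ)) (l1 + l2) * risingFac (-(h : ℝ)) (l3 + l4) /
          (risingFac (-(n : ℝ)) (l1 + l2 + l3 + l4) * (l1.factorial : ℝ) *
            (l2.factorial : ℝ) * (l3.factorial : ℝ) * (l4.factorial : ℝ)) *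
          (1 - r / k) ^ l1 * (1 - (-r - 1) / kb) ^ l2 *
          (1 - s / k) ^ l3 * (1 - (-s - 1) / kb) ^ l4
      else 0

open Finset

lemma risingFac_neg_nat (a m : ℕ) :
    risingFac (-(a : ℝ)) m = (-1) ^ m * (a.descFactorial m : ℝ) := by
  induction m with
  | zero => simp [risingFac]
  | succ m ih =>
    rw [risingFac, Finset.prod_range_succ, ← risingFac, ih, Nat.descFactorial_succ]
    rcases lt_or_ge m a with hlt | hle
    · have h1 : ((a - m : ℕ) : ℝ) = (a : ℝ) - m := by
        push_cast [Nat.cast_sub hlt.le]; ring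
      push_cast [h1]; ring
    · rcases eq_or_lt_of_le hle with rfl | hlt
      · simp
      · rw [Nat.descFactorial_eq_zero_iff_lt.2 hlt]
        have : (a - m : ℕ) = 0 := by omega
        rw [this]; push_cast; ring

/-- The trinomial theorem. -/
lemma trinomial_sum (N : ℕ) (x y : ℝ) :
    ∑ ab ∈ (range (N + 1) ×ˢ range (N + 1)).filter (fun ab => ab.1 + ab.2 ≤ N),
      (N.factorial : ℝ) /
        (((N - ab.1 - ab.2).factorial : ℝ) * (ab.1.factorial : ℝ) * (ab.2.factorial : ℝ)) *
        x ^ ab.1 * y ^ ab.2 = (1 + x + y) ^ N := by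
  have hrhs : (1 + x + y) ^ N = ((x + y) + 1) ^ N := by ring_nf
  rw [hrhs, add_pow]
  have h2 : ∀ c ∈ range (N + 1), (x + y) ^ c * 1 ^ (N - c) * (N.choose c : ℝ)
      = ∑ a ∈ range (c + 1), x ^ a * y ^ (c - a) * (c.choose a : ℝ) * (N.choose c : ℝ) := by
    intro c _
    rw [add_pow, one_pow, mul_one, Finset.sum_mul]
  rw [Finset.sum_congr rfl h2, Finset.sum_sigma']
  refine Finset.sum_nbij' (fun ab => ⟨ab.1 + ab.2, ab.1⟩) (fun p => (p.2, p.1 - p.2))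
    ?_ ?_ ?_ ?_ ?_
  · rintro ⟨a, b⟩ hm
    simp only [Finset.mem_filter, Finset.mem_product, Finset.mem_range] at hm
    simp only [Finset.mem_sigma, Finset.mem_range]
    omega
  · rintro ⟨c, a⟩ hm
    simp only [Finset.mem_sigma, Finset.mem_range] at hm
    simp only [Finset.mem_filter, Finset.mem_product, Finset.mem_range]
    omega
  · rintro ⟨a, b⟩ hm
    show (a, a + b - a) = (a, b)
    simp [Nat.add_sub_cancel_left]
  · rintro ⟨c, a⟩ hm
    simp only [Finset.mem_sigma, Finset.mem_range] at hm
    simp only [Sigma.mk.inj_iff]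
    refine ⟨by omega, ?_⟩
    simp
  · rintro ⟨a, b⟩ hm
    simp only [Finset.mem_filter, Finset.mem_product, Finset.mem_range] at hm
    obtain ⟨⟨-, -⟩, hab⟩ := hm
    have hb : a + b - a = b := by omega
    simp only [hb]
    have key : (N.factorial : ℝ) /
        (((N - a - b).factorial : ℝ) * (a.factorial : ℝ) * (b.factorial : ℝ))
        = ((a + b).choose a : ℝ) * (N.choose (a + b) : ℝ) := by
      have h1 : (a + b).choose a * a.factorial * (a + b - a).factorial = (a + b).factorial :=
        Nat.choose_mul_factorial_mul_factorial (by omega)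
      have h2 : N.choose (a + b) * (a + b).factorial * (N - (a + b)).factorial = N.factorial :=
        Nat.choose_mul_factorial_mul_factorial hab
      have h3 : N - a - b = N - (a + b) := by omega
      rw [hb] at h1
      have hN : (a + b).choose a * N.choose (a + b) *
          ((N - (a + b)).factorial * a.factorial * b.factorial) = N.factorial := by
        rw [← h2, ← h1]; ring
      rw [h3, div_eq_iff (by positivity)]
      exact_mod_cast hN.symm
    rw [key]
    ring

/-- The shifted trinomial sum with falling-factorial weights. -/
lemma shifted_trinomial_sum (n m1 m2 : ℕ) (hm : m1 + m2 ≤ n) (x y : ℝ) :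
    ∑ ab ∈ (range (n + 1) ×ˢ range (n + 1)).filter (fun ab => ab.1 + ab.2 ≤ n),
      (n.factorial : ℝ) /
        (((n - ab.1 - ab.2).factorial : ℝ) * (ab.1.factorial : ℝ) * (ab.2.factorial : ℝ)) *
        (ab.1.descFactorial m1 : ℝ) * (ab.2.descFactorial m2 : ℝ) * x ^ ab.1 * y ^ ab.2
      = (n.descFactorial (m1 + m2) : ℝ) * x ^ m1 * y ^ m2 *
        (1 + x + y) ^ (n - m1 - m2) := by
  set N := n - m1 - m2 with hN
  rw [← Finset.sum_filter_of_ne (p := fun ab => m1 ≤ ab.1 ∧ m2 ≤ ab.2)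
        (by
          rintro ⟨a, b⟩ hm hne
          by_contra hc
          push_neg at hc
          apply hne
          rcases Nat.lt_or_ge a m1 with h | h
          · rw [Nat.descFactorial_eq_zero_iff_lt.2 h]; push_cast; ring
          · rw [Nat.descFactorial_eq_zero_iff_lt.2 (by omega : b < m2)]; push_cast; ring)]
  rw [Finset.filter_filter]
  calc
    ∑ ab ∈ (range (n + 1) ×ˢ range (n + 1)).filter
        (fun ab => ab.1 + ab.2 ≤ n ∧ m1 ≤ ab.1 ∧ m2 ≤ ab.2),
      (n.factorial : ℝ) /
        (((n - ab.1 - ab.2).factorial : ℝ) * (ab.1.factorial : ℝ) * (ab.2.factorial : ℝ)) *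
        (ab.1.descFactorial m1 : ℝ) * (ab.2.descFactorial m2 : ℝ) * x ^ ab.1 * y ^ ab.2
      = ∑ ab ∈ (range (N + 1) ×ˢ range (N + 1)).filter (fun ab => ab.1 + ab.2 ≤ N),
          (n.descFactorial (m1 + m2) : ℝ) * x ^ m1 * y ^ m2 *
          ((N.factorial : ℝ) /
            (((N - ab.1 - ab.2).factorial : ℝ) * (ab.1.factorial : ℝ) * (ab.2.factorial : ℝ)) *
            x ^ ab.1 * y ^ ab.2) := by
      refine Finset.sum_nbij' (fun ab => (ab.1 - m1, ab.2 - m2))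
        (fun ab => (ab.1 + m1, ab.2 + m2)) ?_ ?_ ?_ ?_ ?_
      · rintro ⟨a, b⟩ hmem
        simp only [Finset.mem_filter, Finset.mem_product, Finset.mem_range] at hmem ⊢
        omega
      · rintro ⟨a, b⟩ hmem
        simp only [Finset.mem_filter, Finset.mem_product, Finset.mem_range] at hmem ⊢
        omega
      · rintro ⟨a, b⟩ hmem
        simp only [Finset.mem_filter, Finset.mem_product, Finset.mem_range] at hmem
        show (a - m1 + m1, b - m2 + m2) = (a, b)
        have : a - m1 + m1 = a := by omega
        have : b - m2 + m2 = b := by omega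
        simp_all
      · rintro ⟨a, b⟩ hmem
        show (a + m1 - m1, b + m2 - m2) = (a, b)
        simp
      · rintro ⟨a, b⟩ hmem
        simp only [Finset.mem_filter, Finset.mem_product, Finset.mem_range] at hmem
        obtain ⟨⟨ha1, hb1⟩, hab, ham, hbm⟩ := hmem
        set α := a - m1 with hα
        set β := b - m2 with hβ
        have key : (n.factorial : ℝ) /
            (((n - a - b).factorial : ℝ) * (a.factorial : ℝ) * (b.factorial : ℝ)) *
            (a.descFactorial m1 : ℝ) * (b.descFactorial m2 : ℝ)
            = (n.descFactorial (m1 + m2) : ℝ) *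
              ((N.factorial : ℝ) /
                (((N - α - β).factorial : ℝ) * (α.factorial : ℝ) * (β.factorial : ℝ))) := by
          have e1 : α.factorial * a.descFactorial m1 = a.factorial :=
            Nat.factorial_mul_descFactorial ham
          have e2 : β.factorial * b.descFactorial m2 = b.factorial :=
            Nat.factorial_mul_descFactorial hbm
          have e3 : N.factorial * n.descFactorial (m1 + m2) = n.factorial := by
            have := Nat.factorial_mul_descFactorial (n := n) (k := m1 + m2) hm
            rwa [show n - (m1 + m2) = N by omega] at this
          have e4 : n - a - b = N - α - β := by omega
          have keyN : n.factorial * a.descFactorial m1 * b.descFactorial m2 *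
              ((N - α - β).factorial * α.factorial * β.factorial)
              = n.descFactorial (m1 + m2) * N.factorial *
                ((N - α - β).factorial * a.factorial * b.factorial) := by
            rw [← e3, ← e1, ← e2]; ring
          rw [e4, div_mul_eq_mul_div, div_mul_eq_mul_div, mul_div_assoc',
            div_eq_div_iff (by positivity) (by positivity)]
          exact_mod_cast keyN
        have hxa : x ^ a = x ^ m1 * x ^ α := by rw [← pow_add]; congr 1; omega
        have hyb : y ^ b = y ^ m2 * y ^ β := by rw [← pow_add]; congr 1; omega
        rw [key, hxa, hyb]
        ring
    _ = (n.descFactorial (m1 + m2) : ℝ) * x ^ m1 * y ^ m2 * (1 + x + y) ^ N := by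
      rw [← Finset.mul_sum, trinomial_sum N x y]

/-- The double binomial sum. -/
lemma double_binomial_sum (M j : ℕ) (hj : j ≤ M) (A B W : ℝ) :
    ∑ l ∈ range (M + 1) ×ˢ range (M + 1),
      (-1 : ℝ) ^ (l.1 + l.2) * (j.descFactorial (l.1 + l.2) : ℝ) /
        ((l.1.factorial : ℝ) * (l.2.factorial : ℝ)) *
        A ^ l.1 * B ^ l.2 * W ^ (j - (l.1 + l.2))
      = (W - A - B) ^ j := by
  rw [← Finset.sum_filter_of_ne (p := fun l => l.1 + l.2 ≤ j)
        (by
          rintro ⟨l1, l2⟩ hmem hne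
          by_contra hc
          push_neg at hc
          apply hne
          rw [Nat.descFactorial_eq_zero_iff_lt.2 (by omega)]
          push_cast; ring)]
  have hrhs : (W - A - B) ^ j = ((-(A + B)) + W) ^ j := by ring_nf
  rw [hrhs, add_pow]
  have h2 : ∀ m ∈ range (j + 1), (-(A + B)) ^ m * W ^ (j - m) * (j.choose m : ℝ)
      = ∑ l1 ∈ range (m + 1),
          (-1 : ℝ) ^ m * A ^ l1 * B ^ (m - l1) * (m.choose l1 : ℝ) * W ^ (j - m) *
            (j.choose m : ℝ) := by
    intro m _
    have : (-(A + B)) ^ m = ∑ l1 ∈ range (m + 1),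
        (-1 : ℝ) ^ m * A ^ l1 * B ^ (m - l1) * (m.choose l1 : ℝ) := by
      rw [neg_pow, add_pow, Finset.mul_sum]
      refine Finset.sum_congr rfl fun l1 _ => by ring
    rw [this, Finset.sum_mul, Finset.sum_mul]
  rw [Finset.sum_congr rfl h2, Finset.sum_sigma']
  refine Finset.sum_nbij' (fun l => ⟨l.1 + l.2, l.1⟩) (fun p => (p.2, p.1 - p.2))
    ?_ ?_ ?_ ?_ ?_
  · rintro ⟨l1, l2⟩ hmem
    simp only [Finset.mem_filter, Finset.mem_product, Finset.mem_range] at hmem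
    simp only [Finset.mem_sigma, Finset.mem_range]
    omega
  · rintro ⟨m, l1⟩ hmem
    simp only [Finset.mem_sigma, Finset.mem_range] at hmem
    simp only [Finset.mem_filter, Finset.mem_product, Finset.mem_range]
    omega
  · rintro ⟨l1, l2⟩ hmem
    show (l1, l1 + l2 - l1) = (l1, l2)
    simp [Nat.add_sub_cancel_left]
  · rintro ⟨m, l1⟩ hmem
    simp only [Finset.mem_sigma, Finset.mem_range] at hmem
    simp only [Sigma.mk.inj_iff]
    refine ⟨by omega, ?_⟩
    simp
  · rintro ⟨l1, l2⟩ hmem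
    simp only [Finset.mem_filter, Finset.mem_product, Finset.mem_range] at hmem
    obtain ⟨-, hlj⟩ := hmem
    have hb : l1 + l2 - l1 = l2 := by omega
    simp only [hb]
    have key : (j.descFactorial (l1 + l2) : ℝ) / ((l1.factorial : ℝ) * (l2.factorial : ℝ))
        = ((l1 + l2).choose l1 : ℝ) * (j.choose (l1 + l2) : ℝ) := by
      have h1 : (l1 + l2).choose l1 * l1.factorial * (l1 + l2 - l1).factorial
          = (l1 + l2).factorial := Nat.choose_mul_factorial_mul_factorial (by omega)
      rw [hb] at h1
      have h2 : j.descFactorial (l1 + l2) = (l1 + l2).factorial * j.choose (l1 + l2) :=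
        Nat.descFactorial_eq_factorial_mul_choose _ _
      rw [div_eq_iff (by positivity)]
      rw [h2, ← h1]
      push_cast
      ring
    have e : (-1 : ℝ) ^ (l1 + l2) * (j.descFactorial (l1 + l2) : ℝ) /
        ((l1.factorial : ℝ) * (l2.factorial : ℝ))
        = (-1 : ℝ) ^ (l1 + l2) * (((l1 + l2).choose l1 : ℝ) * (j.choose (l1 + l2) : ℝ)) := by
      rw [mul_div_assoc, key]
    rw [e]
    ring

/-- Cleaned nested form. -/
lemma krawtchouk_eq (n : ℕ) (k kb r s : ℝ) (a b j h : ℕ) (hjh : j + h ≤ n) :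
    bivariateKrawtchouk n k kb r s a b j h =
    ∑ l1 ∈ range (n + 1), ∑ l2 ∈ range (n + 1), ∑ l3 ∈ range (n + 1), ∑ l4 ∈ range (n + 1),
      (-1 : ℝ) ^ (l1 + l2 + l3 + l4) *
        (a.descFactorial (l1 + l3) : ℝ) * (b.descFactorial (l2 + l4) : ℝ) *
        (j.descFactorial (l1 + l2) : ℝ) * (h.descFactorial (l3 + l4) : ℝ) /
        ((n.descFactorial (l1 + l2 + l3 + l4) : ℝ) * (l1.factorial : ℝ) *
          (l2.factorial : ℝ) * (l3.factorial : ℝ) * (l4.factorial : ℝ)) *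
        (1 - r / k) ^ l1 * (1 - (-r - 1) / kb) ^ l2 *
        (1 - s / k) ^ l3 * (1 - (-s - 1) / kb) ^ l4 := by
  rw [bivariateKrawtchouk]
  refine Finset.sum_congr rfl fun l1 _ => Finset.sum_congr rfl fun l2 _ =>
    Finset.sum_congr rfl fun l3 _ => Finset.sum_congr rfl fun l4 _ => ?_
  rcases le_or_gt (l1 + l2 + l3 + l4) n with hle | hlt
  · rw [if_pos hle, risingFac_neg_nat, risingFac_neg_nat, risingFac_neg_nat,
      risingFac_neg_nat, risingFac_neg_nat]
    have hnd : ((n.descFactorial (l1 + l2 + l3 + l4) : ℕ) : ℝ) ≠ 0 := by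
      simp only [ne_eq, Nat.cast_eq_zero, Nat.descFactorial_eq_zero_iff_lt]
      omega
    have hsgn : ((-1 : ℝ)) ^ (l1 + l2 + l3 + l4) ≠ 0 := by
      apply pow_ne_zero; norm_num
    have hf1 : (l1.factorial : ℝ) ≠ 0 := Nat.cast_ne_zero.2 l1.factorial_ne_zero
    have hf2 : (l2.factorial : ℝ) ≠ 0 := Nat.cast_ne_zero.2 l2.factorial_ne_zero
    have hf3 : (l3.factorial : ℝ) ≠ 0 := Nat.cast_ne_zero.2 l3.factorial_ne_zero
    have hf4 : (l4.factorial : ℝ) ≠ 0 := Nat.cast_ne_zero.2 l4.factorial_ne_zero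
    field_simp
    ring
  · rw [if_neg (by omega)]
    symm
    have : j < l1 + l2 ∨ h < l3 + l4 := by omega
    rcases this with hlt2 | hlt2
    · rw [Nat.descFactorial_eq_zero_iff_lt.2 hlt2]
      push_cast; ring
    · rw [Nat.descFactorial_eq_zero_iff_lt.2 hlt2]
      push_cast; ring

/-- `bivariateKrawtchouk` as a single sum over a product set, in descFactorial form. -/
lemma krawtchouk_eq_product (n : ℕ) (k kb r s : ℝ) (a b j h : ℕ) (hjh : j + h ≤ n) :
    bivariateKrawtchouk n k kb r s a b j h =
    ∑ l ∈ (range (n + 1) ×ˢ range (n + 1)) ×ˢ (range (n + 1) ×ˢ range (n + 1)),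
      (-1 : ℝ) ^ (l.1.1 + l.1.2 + l.2.1 + l.2.2) *
        (a.descFactorial (l.1.1 + l.2.1) : ℝ) * (b.descFactorial (l.1.2 + l.2.2) : ℝ) *
        (j.descFactorial (l.1.1 + l.1.2) : ℝ) * (h.descFactorial (l.2.1 + l.2.2) : ℝ) /
        ((n.descFactorial (l.1.1 + l.1.2 + l.2.1 + l.2.2) : ℝ) * (l.1.1.factorial : ℝ) *
          (l.1.2.factorial : ℝ) * (l.2.1.factorial : ℝ) * (l.2.2.factorial : ℝ)) *
        (1 - r / k) ^ l.1.1 * (1 - (-r - 1) / kb) ^ l.1.2 *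
        (1 - s / k) ^ l.2.1 * (1 - (-s - 1) / kb) ^ l.2.2 := by
  rw [krawtchouk_eq n k kb r s a b j h hjh]
  simp only [Finset.sum_product]

lemma inner_ab_sum (n j h : ℕ) (hjh : j + h ≤ n) (k kb r s ξ₁ ξ₂ : ℝ)
    (hk : k ≠ 0) (hkb : kb ≠ 0) (l1 l2 l3 l4 : ℕ) :
    ∑ ab ∈ (range (n + 1) ×ˢ range (n + 1)).filter (fun ab => ab.1 + ab.2 ≤ n),
      ((n.factorial : ℝ) /
          (((n - ab.1 - ab.2).factorial : ℝ) * (ab.1.factorial : ℝ) * (ab.2.factorial : ℝ)) *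
          k ^ ab.1 * kb ^ ab.2) *
        ((-1 : ℝ) ^ (l1 + l2 + l3 + l4) *
          (ab.1.descFactorial (l1 + l3) : ℝ) * (ab.2.descFactorial (l2 + l4) : ℝ) *
          (j.descFactorial (l1 + l2) : ℝ) * (h.descFactorial (l3 + l4) : ℝ) /
          ((n.descFactorial (l1 + l2 + l3 + l4) : ℝ) * (l1.factorial : ℝ) *
            (l2.factorial : ℝ) * (l3.factorial : ℝ) * (l4.factorial : ℝ)) *
          (1 - r / k) ^ l1 * (1 - (-r - 1) / kb) ^ l2 *
          (1 - s / k) ^ l3 * (1 - (-s - 1) / kb) ^ l4) *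
        ξ₁ ^ ab.1 * ξ₂ ^ ab.2
    = ((-1 : ℝ) ^ (l1 + l2) * (j.descFactorial (l1 + l2) : ℝ) /
          ((l1.factorial : ℝ) * (l2.factorial : ℝ)) *
          ((k - r) * ξ₁) ^ l1 * ((kb + r + 1) * ξ₂) ^ l2 *
          (1 + k * ξ₁ + kb * ξ₂) ^ (j - (l1 + l2))) *
      ((-1 : ℝ) ^ (l3 + l4) * (h.descFactorial (l3 + l4) : ℝ) /
          ((l3.factorial : ℝ) * (l4.factorial : ℝ)) *
          ((k - s) * ξ₁) ^ l3 * ((kb + s + 1) * ξ₂) ^ l4 *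
          (1 + k * ξ₁ + kb * ξ₂) ^ (h - (l3 + l4))) *
      (1 + k * ξ₁ + kb * ξ₂) ^ (n - j - h) := by
  by_cases hcase : l1 + l2 ≤ j ∧ l3 + l4 ≤ h
  · obtain ⟨hj12, hh34⟩ := hcase
    have hm : (l1 + l3) + (l2 + l4) ≤ n := by omega
    have step1 : ∀ ab ∈ (range (n + 1) ×ˢ range (n + 1)).filter
        (fun ab => ab.1 + ab.2 ≤ n),
        ((n.factorial : ℝ) /
          (((n - ab.1 - ab.2).factorial : ℝ) * (ab.1.factorial : ℝ) * (ab.2.factorial : ℝ)) *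
          k ^ ab.1 * kb ^ ab.2) *
        ((-1 : ℝ) ^ (l1 + l2 + l3 + l4) *
          (ab.1.descFactorial (l1 + l3) : ℝ) * (ab.2.descFactorial (l2 + l4) : ℝ) *
          (j.descFactorial (l1 + l2) : ℝ) * (h.descFactorial (l3 + l4) : ℝ) /
          ((n.descFactorial (l1 + l2 + l3 + l4) : ℝ) * (l1.factorial : ℝ) *
            (l2.factorial : ℝ) * (l3.factorial : ℝ) * (l4.factorial : ℝ)) *
          (1 - r / k) ^ l1 * (1 - (-r - 1) / kb) ^ l2 *
          (1 - s / k) ^ l3 * (1 - (-s - 1) / kb) ^ l4) *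
        ξ₁ ^ ab.1 * ξ₂ ^ ab.2
        = ((-1 : ℝ) ^ (l1 + l2 + l3 + l4) *
            (j.descFactorial (l1 + l2) : ℝ) * (h.descFactorial (l3 + l4) : ℝ) /
            ((n.descFactorial (l1 + l2 + l3 + l4) : ℝ) * (l1.factorial : ℝ) *
              (l2.factorial : ℝ) * (l3.factorial : ℝ) * (l4.factorial : ℝ)) *
            (1 - r / k) ^ l1 * (1 - (-r - 1) / kb) ^ l2 *
            (1 - s / k) ^ l3 * (1 - (-s - 1) / kb) ^ l4) *
          ((n.factorial : ℝ) /
            (((n - ab.1 - ab.2).factorial : ℝ) * (ab.1.factorial : ℝ) * (ab.2.factorial : ℝ)) *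
            (ab.1.descFactorial (l1 + l3) : ℝ) * (ab.2.descFactorial (l2 + l4) : ℝ) *
            (k * ξ₁) ^ ab.1 * (kb * ξ₂) ^ ab.2) := by
      intro ab _
      simp only [mul_pow]
      ring
    rw [Finset.sum_congr rfl step1, ← Finset.mul_sum,
      shifted_trinomial_sum n (l1 + l3) (l2 + l4) hm (k * ξ₁) (kb * ξ₂)]
    -- now a pure scalar identity
    have hnd : ((n.descFactorial (l1 + l2 + l3 + l4) : ℕ) : ℝ) ≠ 0 := by
      simp only [ne_eq, Nat.cast_eq_zero, Nat.descFactorial_eq_zero_iff_lt]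
      omega
    have hnd2 : (n.descFactorial ((l1 + l3) + (l2 + l4)) : ℝ)
        = (n.descFactorial (l1 + l2 + l3 + l4) : ℝ) := by
      rw [show l1 + l3 + (l2 + l4) = l1 + l2 + l3 + l4 from by omega]
    have hA : ((k - r) * ξ₁) ^ l1 = (1 - r / k) ^ l1 * (k * ξ₁) ^ l1 := by
      rw [← mul_pow]
      congr 1
      field_simp
    have hB : ((kb + r + 1) * ξ₂) ^ l2 = (1 - (-r - 1) / kb) ^ l2 * (kb * ξ₂) ^ l2 := by
      rw [← mul_pow]
      congr 1
      field_simp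
      ring
    have hC : ((k - s) * ξ₁) ^ l3 = (1 - s / k) ^ l3 * (k * ξ₁) ^ l3 := by
      rw [← mul_pow]
      congr 1
      field_simp
    have hE : ((kb + s + 1) * ξ₂) ^ l4 = (1 - (-s - 1) / kb) ^ l4 * (kb * ξ₂) ^ l4 := by
      rw [← mul_pow]
      congr 1
      field_simp
      ring
    have hW : (1 + k * ξ₁ + kb * ξ₂) ^ (n - (l1 + l3) - (l2 + l4))
        = (1 + k * ξ₁ + kb * ξ₂) ^ (j - (l1 + l2)) *
          (1 + k * ξ₁ + kb * ξ₂) ^ (h - (l3 + l4)) *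
          (1 + k * ξ₁ + kb * ξ₂) ^ (n - j - h) := by
      rw [← pow_add, ← pow_add]
      congr 1
      omega
    rw [hnd2, hA, hB, hC, hE, hW, pow_add (k * ξ₁) l1 l3, pow_add (kb * ξ₂) l2 l4]
    have hf1 : (l1.factorial : ℝ) ≠ 0 := Nat.cast_ne_zero.2 l1.factorial_ne_zero
    have hf2 : (l2.factorial : ℝ) ≠ 0 := Nat.cast_ne_zero.2 l2.factorial_ne_zero
    have hf3 : (l3.factorial : ℝ) ≠ 0 := Nat.cast_ne_zero.2 l3.factorial_ne_zero
    have hf4 : (l4.factorial : ℝ) ≠ 0 := Nat.cast_ne_zero.2 l4.factorial_ne_zero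
    generalize (1 - r / k) = u1
    generalize (1 - (-r - 1) / kb) = u2
    generalize (1 - s / k) = u3
    generalize (1 - (-s - 1) / kb) = u4
    generalize (n.descFactorial (l1 + l2 + l3 + l4) : ℝ) = D at hnd ⊢
    generalize (l1.factorial : ℝ) = F1 at hf1 ⊢
    generalize (l2.factorial : ℝ) = F2 at hf2 ⊢
    generalize (l3.factorial : ℝ) = F3 at hf3 ⊢
    generalize (l4.factorial : ℝ) = F4 at hf4 ⊢
    generalize (1 + k * ξ₁ + kb * ξ₂) = W
    generalize k * ξ₁ = A
    generalize kb * ξ₂ = B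
    clear step1 hnd2 hA hB hC hE hW
    rw [show l1 + l2 + l3 + l4 = (l1 + l2) + (l3 + l4) by omega, pow_add]
    generalize ((-1 : ℝ) ^ (l1 + l2)) = S1
    generalize ((-1 : ℝ) ^ (l3 + l4)) = S2
    generalize (j.descFactorial (l1 + l2) : ℝ) = J
    generalize (h.descFactorial (l3 + l4) : ℝ) = H
    have e : D⁻¹ * D = 1 := inv_mul_cancel₀ hnd
    simp only [div_eq_mul_inv, mul_inv]
    linear_combination (S1 * S2 * J * H * F1⁻¹ * F2⁻¹ * F3⁻¹ * F4⁻¹ * u1 ^ l1 * u2 ^ l2 *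
      u3 ^ l3 * u4 ^ l4 * A ^ l1 * A ^ l3 * B ^ l2 * B ^ l4 * W ^ (j - (l1 + l2)) *
      W ^ (h - (l3 + l4)) * W ^ (n - j - h)) * e
  · push_neg at hcase
    rcases le_or_gt (l1 + l2) j with hj12 | hj12
    · have hh34 : h < l3 + l4 := hcase hj12
      rw [Nat.descFactorial_eq_zero_iff_lt.2 hh34]
      push_cast
      rw [Finset.sum_eq_zero (fun ab _ => by ring)]
      ring
    · rw [Nat.descFactorial_eq_zero_iff_lt.2 hj12]
      push_cast
      rw [Finset.sum_eq_zero (fun ab _ => by ring)]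
      ring


/-- The generating-function identity with generic nonzero parameters `k`, `kb`. -/
lemma key_identity (n j h : ℕ) (hjh : j + h ≤ n) (k kb r s ξ₁ ξ₂ : ℝ)
    (hk : k ≠ 0) (hkb : kb ≠ 0) :
    ∑ ab ∈ (Finset.range (n + 1) ×ˢ Finset.range (n + 1)).filter
        (fun ab => ab.1 + ab.2 ≤ n),
      ((n.factorial : ℝ) /
          (((n - ab.1 - ab.2).factorial : ℝ) * (ab.1.factorial : ℝ) *
            (ab.2.factorial : ℝ)) * k ^ ab.1 * kb ^ ab.2) *
        bivariateKrawtchouk n k kb r s ab.1 ab.2 j h *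
        ξ₁ ^ ab.1 * ξ₂ ^ ab.2 =
      (1 + k * ξ₁ + kb * ξ₂) ^ (n - j - h) *
        (1 + r * ξ₁ + (-r - 1) * ξ₂) ^ j * (1 + s * ξ₁ + (-s - 1) * ξ₂) ^ h := by
  calc
    ∑ ab ∈ (Finset.range (n + 1) ×ˢ Finset.range (n + 1)).filter
        (fun ab => ab.1 + ab.2 ≤ n),
      ((n.factorial : ℝ) /
          (((n - ab.1 - ab.2).factorial : ℝ) * (ab.1.factorial : ℝ) *
            (ab.2.factorial : ℝ)) * k ^ ab.1 * kb ^ ab.2) *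
        bivariateKrawtchouk n k kb r s ab.1 ab.2 j h * ξ₁ ^ ab.1 * ξ₂ ^ ab.2
      = ∑ ab ∈ (Finset.range (n + 1) ×ˢ Finset.range (n + 1)).filter
            (fun ab => ab.1 + ab.2 ≤ n),
          ∑ l ∈ (range (n + 1) ×ˢ range (n + 1)) ×ˢ (range (n + 1) ×ˢ range (n + 1)),
            ((n.factorial : ℝ) /
              (((n - ab.1 - ab.2).factorial : ℝ) * (ab.1.factorial : ℝ) *
                (ab.2.factorial : ℝ)) * k ^ ab.1 * kb ^ ab.2) *
            ((-1 : ℝ) ^ (l.1.1 + l.1.2 + l.2.1 + l.2.2) *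
              (ab.1.descFactorial (l.1.1 + l.2.1) : ℝ) *
              (ab.2.descFactorial (l.1.2 + l.2.2) : ℝ) *
              (j.descFactorial (l.1.1 + l.1.2) : ℝ) *
              (h.descFactorial (l.2.1 + l.2.2) : ℝ) /
              ((n.descFactorial (l.1.1 + l.1.2 + l.2.1 + l.2.2) : ℝ) *
                (l.1.1.factorial : ℝ) * (l.1.2.factorial : ℝ) *
                (l.2.1.factorial : ℝ) * (l.2.2.factorial : ℝ)) *
              (1 - r / k) ^ l.1.1 * (1 - (-r - 1) / kb) ^ l.1.2 *
              (1 - s / k) ^ l.2.1 * (1 - (-s - 1) / kb) ^ l.2.2) *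
            ξ₁ ^ ab.1 * ξ₂ ^ ab.2 := by
      refine Finset.sum_congr rfl fun ab _ => ?_
      rw [krawtchouk_eq_product n k kb r s ab.1 ab.2 j h hjh, Finset.mul_sum,
        Finset.sum_mul, Finset.sum_mul]
    _ = ∑ l ∈ (range (n + 1) ×ˢ range (n + 1)) ×ˢ (range (n + 1) ×ˢ range (n + 1)),
          ∑ ab ∈ (Finset.range (n + 1) ×ˢ Finset.range (n + 1)).filter
            (fun ab => ab.1 + ab.2 ≤ n),
            ((n.factorial : ℝ) /
              (((n - ab.1 - ab.2).factorial : ℝ) * (ab.1.factorial : ℝ) *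
                (ab.2.factorial : ℝ)) * k ^ ab.1 * kb ^ ab.2) *
            ((-1 : ℝ) ^ (l.1.1 + l.1.2 + l.2.1 + l.2.2) *
              (ab.1.descFactorial (l.1.1 + l.2.1) : ℝ) *
              (ab.2.descFactorial (l.1.2 + l.2.2) : ℝ) *
              (j.descFactorial (l.1.1 + l.1.2) : ℝ) *
              (h.descFactorial (l.2.1 + l.2.2) : ℝ) /
              ((n.descFactorial (l.1.1 + l.1.2 + l.2.1 + l.2.2) : ℝ) *
                (l.1.1.factorial : ℝ) * (l.1.2.factorial : ℝ) *
                (l.2.1.factorial : ℝ) * (l.2.2.factorial : ℝ)) *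
              (1 - r / k) ^ l.1.1 * (1 - (-r - 1) / kb) ^ l.1.2 *
              (1 - s / k) ^ l.2.1 * (1 - (-s - 1) / kb) ^ l.2.2) *
            ξ₁ ^ ab.1 * ξ₂ ^ ab.2 := Finset.sum_comm
    _ = ∑ l ∈ (range (n + 1) ×ˢ range (n + 1)) ×ˢ (range (n + 1) ×ˢ range (n + 1)),
          ((-1 : ℝ) ^ (l.1.1 + l.1.2) * (j.descFactorial (l.1.1 + l.1.2) : ℝ) /
              ((l.1.1.factorial : ℝ) * (l.1.2.factorial : ℝ)) *
              ((k - r) * ξ₁) ^ l.1.1 * ((kb + r + 1) * ξ₂) ^ l.1.2 *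
              (1 + k * ξ₁ + kb * ξ₂) ^ (j - (l.1.1 + l.1.2))) *
          ((-1 : ℝ) ^ (l.2.1 + l.2.2) * (h.descFactorial (l.2.1 + l.2.2) : ℝ) /
              ((l.2.1.factorial : ℝ) * (l.2.2.factorial : ℝ)) *
              ((k - s) * ξ₁) ^ l.2.1 * ((kb + s + 1) * ξ₂) ^ l.2.2 *
              (1 + k * ξ₁ + kb * ξ₂) ^ (h - (l.2.1 + l.2.2))) *
          (1 + k * ξ₁ + kb * ξ₂) ^ (n - j - h) := by
      refine Finset.sum_congr rfl fun l _ => ?_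
      exact inner_ab_sum n j h hjh k kb r s ξ₁ ξ₂ hk hkb l.1.1 l.1.2 l.2.1 l.2.2
    _ = (∑ p ∈ range (n + 1) ×ˢ range (n + 1),
          (-1 : ℝ) ^ (p.1 + p.2) * (j.descFactorial (p.1 + p.2) : ℝ) /
            ((p.1.factorial : ℝ) * (p.2.factorial : ℝ)) *
            ((k - r) * ξ₁) ^ p.1 * ((kb + r + 1) * ξ₂) ^ p.2 *
            (1 + k * ξ₁ + kb * ξ₂) ^ (j - (p.1 + p.2))) *
        (∑ q ∈ range (n + 1) ×ˢ range (n + 1),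
          (-1 : ℝ) ^ (q.1 + q.2) * (h.descFactorial (q.1 + q.2) : ℝ) /
            ((q.1.factorial : ℝ) * (q.2.factorial : ℝ)) *
            ((k - s) * ξ₁) ^ q.1 * ((kb + s + 1) * ξ₂) ^ q.2 *
            (1 + k * ξ₁ + kb * ξ₂) ^ (h - (q.1 + q.2))) *
        (1 + k * ξ₁ + kb * ξ₂) ^ (n - j - h) := by
      rw [Finset.sum_product]
      rw [Finset.sum_mul_sum]
      rw [Finset.sum_mul]
      refine Finset.sum_congr rfl fun p _ => ?_
      rw [Finset.sum_mul]
    _ = ((1 + k * ξ₁ + kb * ξ₂) - (k - r) * ξ₁ - (kb + r + 1) * ξ₂) ^ j *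
        ((1 + k * ξ₁ + kb * ξ₂) - (k - s) * ξ₁ - (kb + s + 1) * ξ₂) ^ h *
        (1 + k * ξ₁ + kb * ξ₂) ^ (n - j - h) := by
      rw [double_binomial_sum n j (by omega) ((k - r) * ξ₁) ((kb + r + 1) * ξ₂)
          (1 + k * ξ₁ + kb * ξ₂),
        double_binomial_sum n h (by omega) ((k - s) * ξ₁) ((kb + s + 1) * ξ₂)
          (1 + k * ξ₁ + kb * ξ₂)]
    _ = (1 + k * ξ₁ + kb * ξ₂) ^ (n - j - h) *
        (1 + r * ξ₁ + (-r - 1) * ξ₂) ^ j * (1 + s * ξ₁ + (-s - 1) * ξ₂) ^ h := by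
      rw [show (1 + k * ξ₁ + kb * ξ₂) - (k - r) * ξ₁ - (kb + r + 1) * ξ₂
          = 1 + r * ξ₁ + (-r - 1) * ξ₂ from by ring,
        show (1 + k * ξ₁ + kb * ξ₂) - (k - s) * ξ₁ - (kb + s + 1) * ξ₂
          = 1 + s * ξ₁ + (-s - 1) * ξ₂ from by ring]
      ring


/-- Generating function for the bivariate Krawtchouk polynomials attached to the
eigenvalue data `k, k̄ = v-k-1, r, s, r̄ = -s-1, s̄ = -r-1` of a strongly regular graph
and its complement: for `j + h ≤ n`,
`Σ_{a+b ≤ n} k_{a,b} 𝒦_{a,b}(j,h) ξ₁^a ξ₂^b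
  = (1 + kξ₁ + k̄ξ₂)^{n-j-h} (1 + rξ₁ + s̄ξ₂)^j (1 + sξ₁ + r̄ξ₂)^h`,
where `k_{a,b} = n!/((n-a-b)! a! b!) · k^a k̄^b`. -/
theorem bivariateKrawtchouk_generating_function {V : Type*} [Fintype V] [DecidableEq V]
    (G : SimpleGraph V) [DecidableRel G.Adj] (v k lam mu : ℕ)
    (hsrg : G.IsSRGWith v k lam mu) (hk0 : 0 < k) (hkv : k < v - 1)
    (r s : ℝ)
    (hr : IsRestrictedEigenvalue G r) (hs : IsRestrictedEigenvalue G s) (hrs : s < r)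
    (n j h : ℕ) (hjh : j + h ≤ n) (ξ₁ ξ₂ : ℝ) :
    ∑ ab ∈ (Finset.range (n + 1) ×ˢ Finset.range (n + 1)).filter
        (fun ab => ab.1 + ab.2 ≤ n),
      ((n.factorial : ℝ) /
          (((n - ab.1 - ab.2).factorial : ℝ) * (ab.1.factorial : ℝ) *
            (ab.2.factorial : ℝ)) * (k : ℝ) ^ ab.1 * ((v : ℝ) - k - 1) ^ ab.2) *
        bivariateKrawtchouk n (k : ℝ) ((v : ℝ) - k - 1) r s ab.1 ab.2 j h *
        ξ₁ ^ ab.1 * ξ₂ ^ ab.2 =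
      (1 + (k : ℝ) * ξ₁ + ((v : ℝ) - k - 1) * ξ₂) ^ (n - j - h) *
        (1 + r * ξ₁ + (-r - 1) * ξ₂) ^ j * (1 + s * ξ₁ + (-s - 1) * ξ₂) ^ h := by
  have hk : (k : ℝ) ≠ 0 := by
    exact_mod_cast hk0.ne'
  have hv2 : (k : ℕ) + 2 ≤ v := by omega
  have hkb : ((v : ℝ) - k - 1) ≠ 0 := by
    have : (k : ℝ) + 2 ≤ (v : ℝ) := by exact_mod_cast hv2
    nlinarith
  exact key_identity n j h hjh (k : ℝ) ((v : ℝ) - k - 1) r s ξ₁ ξ₂ hk hkb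
end
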